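/- arXiv:1910.10932 — 2 statements merged into one kernel-verified Lean document; each statement's English description precedes it below -/
import Mathlib

section
/- Let n be a positive odd integer and 0 ≤ k ≤ (n-1)/2, and let a and q be elements (q a root of Φ_n, or work modulo Φ_n(q) in a suitable ring). Then (aq;q^2)_{(n-1)/2-k} / (q^2/a;q^2)_{(n-1)/2-k} ≡ (-a)^((n-1)/2-2k) * (aq;q^2)_k / (q^2/a;q^2)_k * q^((n-1)^2/4 + k) modulo Φ_n(q), as rational functions of a and q. -/
open Polynomial

/-- The field ℚ(a) of rational functions in the parameter a. -/
noncomputable abbrev Ka : Type := RatFunc ℚ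

/-- The field ℚ(a)(q) of rational functions in a and q. -/
noncomputable abbrev Kaq : Type := RatFunc Ka

/-- The variable q. -/
noncomputable def q : Kaq := RatFunc.X

/-- The parameter a, viewed as a constant rational function in q. -/
noncomputable def a : Kaq := RatFunc.C (RatFunc.X : RatFunc ℚ)

/-- q-shifted factorial (x; s)_k = ∏_{j<k} (1 - x s^j). -/
noncomputable def qp (x s : Kaq) (k : ℕ) : Kaq :=
  ∏ j ∈ Finset.range k, (1 - x * s ^ j)

/-- Congruence of rational functions modulo a polynomial. -/
def modCong (x y : Kaq) (P : Polynomial Ka) : Prop :=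
  ∃ r s : Polynomial Ka, IsCoprime s P ∧ P ∣ r ∧
    x - y = algebraMap (Polynomial Ka) Kaq r / algebraMap (Polynomial Ka) Kaq s

section Abstract
open Finset

lemma lemA {S : Type*} [CommRing S] (u a' Q : S) (hu : u * a' = 1)
    (m : ℕ) (hQ : Q ^ (2*m+1) = 1) :
    ∀ t, t ≤ m → ∏ j ∈ range t, (1 - u * Q^(2*j+1))
      = (-1)^t * u^t * Q^(t^2) * ∏ j ∈ range t, (1 - a' * Q^(2*(m-j))) := by
  intro t
  induction t with
  | zero => simp
  | succ t ih =>
    intro ht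
    have htm : t ≤ m := by omega
    have hfac : (1 : S) - u * Q^(2*t+1) = (-u * Q^(2*t+1)) * (1 - a' * Q^(2*(m-t))) := by
      have h1 : Q^(2*t+1) * Q^(2*(m-t)) = 1 := by
        rw [← pow_add]
        have : 2*t+1 + 2*(m-t) = 2*m+1 := by omega
        rw [this, hQ]
      have : -u * Q ^ (2 * t + 1) * (1 - a' * Q ^ (2 * (m - t)))
          = -u * Q^(2*t+1) + (u * a') * (Q^(2*t+1) * Q^(2*(m-t))) := by ring
      rw [this, hu, h1]; ring
    rw [prod_range_succ, prod_range_succ, ih htm, hfac]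
    have hexp : Q^(t^2) * Q^(2*t+1) = Q^((t+1)^2) := by rw [← pow_add]; congr 1; ring
    calc (-1:S)^t * u^t * Q^(t^2) * (∏ j ∈ range t, (1 - a' * Q^(2*(m-j)))) *
          ((-u * Q^(2*t+1)) * (1 - a' * Q^(2*(m-t))))
        = (-1)^(t+1) * u^(t+1) * (Q^(t^2) * Q^(2*t+1)) *
          ((∏ j ∈ range t, (1 - a' * Q^(2*(m-j)))) * (1 - a' * Q^(2*(m-t)))) := by ring
      _ = _ := by rw [hexp]

lemma lemB {S : Type*} [CommRing S] (a' Q : S) (m s : ℕ) (hs : s ≤ m) :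
    (∏ j ∈ range (m-s), (1 - a' * Q^(2*(m-j)))) * ∏ j ∈ range s, (1 - a' * Q^(2*j+2))
      = ∏ j ∈ range m, (1 - a' * Q^(2*j+2)) := by
  obtain ⟨d, hd⟩ : ∃ d, m = s + d := ⟨m - s, by omega⟩
  subst hd
  rw [show s + d - s = d from by omega]
  rw [prod_range_add, mul_comm]
  congr 1
  rw [← prod_range_reflect]
  refine prod_congr rfl (fun j hj => ?_)
  have hj' : j < d := mem_range.mp hj
  have : 2*(s+d-(d-1-j)) = 2*(s+j)+2 := by omega
  rw [this]

lemma lemC {S : Type*} [CommRing S] (u a' Q : S) (hu : u * a' = 1)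
    (m : ℕ) (hQ : Q ^ (2*m+1) = 1) (k : ℕ) (hk : k ≤ m) :
    (∏ j ∈ range (m-k), (1 - u * Q^(2*j+1))) * ∏ j ∈ range k, (1 - a' * Q^(2*j+2))
      = ((-1)^m * u^m * a'^(2*k) * Q^(m^2+k)) *
        ((∏ j ∈ range k, (1 - u * Q^(2*j+1))) * ∏ j ∈ range (m-k), (1 - a' * Q^(2*j+2))) := by
  obtain ⟨d, hd⟩ : ∃ d, m = k + d := ⟨m - k, by omega⟩
  have hmk : m - k = d := by omega
  have hB1 := lemB a' Q m k hk
  have hB2 := lemB a' Q m (m-k) (by omega)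
  rw [show m - (m-k) = k from by omega] at hB2
  rw [lemA u a' Q hu m hQ (m-k) (by omega), lemA u a' Q hu m hQ k hk]
  set B := ∏ j ∈ range m, (1 - a' * Q^(2*j+2)) with hBdef
  calc (-1:S)^(m-k) * u^(m-k) * Q^((m-k)^2) * (∏ j ∈ range (m-k), (1 - a' * Q^(2*(m-j)))) *
        ∏ j ∈ range k, (1 - a' * Q^(2*j+2))
      = (-1)^(m-k) * u^(m-k) * Q^((m-k)^2) *
        ((∏ j ∈ range (m-k), (1 - a' * Q^(2*(m-j)))) * ∏ j ∈ range k, (1 - a' * Q^(2*j+2))) := by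
        ring
    _ = (-1)^(m-k) * u^(m-k) * Q^((m-k)^2) * B := by rw [hB1]
    _ = ((-1)^m * u^m * a'^(2*k) * Q^(m^2+k)) * ((-1)^k * u^k * Q^(k^2)) * B := by
        rw [hmk]; subst hd
        have key : ((-1:S))^(2*k) * ((u*a')^(2*k)) * ((Q^(2*(k+d)+1))^k) = 1 := by
          rw [hu, hQ, pow_mul, neg_one_sq]; simp
        have expand : (-1:S)^(k+d) * u^(k+d) * a'^(2*k) * Q^((k+d)^2+k) * ((-1)^k * u^k * Q^(k^2))
            = ((-1)^d * u^d * Q^(d^2)) * (((-1:S))^(2*k) * ((u*a')^(2*k)) * ((Q^(2*(k+d)+1))^k)) := by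
          ring_nf
        have hc : (-1:S)^d * u^d * Q^(d^2)
            = ((-1)^(k+d) * u^(k+d) * a'^(2*k) * Q^((k+d)^2+k)) * ((-1)^k * u^k * Q^(k^2)) := by
          rw [show ((-1:S)^(k+d) * u^(k+d) * a'^(2*k) * Q^((k+d)^2+k)) * ((-1)^k * u^k * Q^(k^2))
              = (-1:S)^(k+d) * u^(k+d) * a'^(2*k) * Q^((k+d)^2+k) * ((-1)^k * u^k * Q^(k^2)) from rfl,
            expand, key, mul_one]
        rw [hc]
    _ = ((-1)^m * u^m * a'^(2*k) * Q^(m^2+k)) * ((-1)^k * u^k * Q^(k^2) *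
          ((∏ j ∈ range k, (1 - a' * Q^(2*(m-j)))) * ∏ j ∈ range (m-k), (1 - a' * Q^(2*j+2)))) := by
        rw [hB2]; ring
    _ = _ := by ring

end Abstract

lemma coprime_aux (nn : ℕ) (c : Ka) (hc : c ^ nn ≠ 1) (t : ℕ) :
    IsCoprime (1 - Polynomial.C c * Polynomial.X ^ t) ((Polynomial.X : Polynomial Ka) ^ nn - 1) := by
  obtain ⟨w, hw⟩ : (1 - C c * X^t : Polynomial Ka) ∣ 1 - C (c^nn) * X^(t*nn) := by
    have h := sub_dvd_pow_sub_pow (1 : Polynomial Ka) (C c * X^t) nn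
    rw [one_pow, mul_pow, ← C_pow, ← pow_mul] at h
    exact h
  obtain ⟨v, hv⟩ : ((Polynomial.X : Polynomial Ka)^nn - 1) ∣ (X^(t*nn) - 1) := by
    have h := sub_dvd_pow_sub_pow ((Polynomial.X : Polynomial Ka)^nn) 1 t
    rw [one_pow, ← pow_mul, mul_comm nn t] at h
    exact h
  have h1 : (1 : Ka) - c^nn ≠ 0 := sub_ne_zero.mpr fun h => hc h.symm
  set e : Ka := (1 - c^nn)⁻¹ with he
  refine ⟨C e * w, C e * C (c^nn) * v, ?_⟩
  have hC : (C e : Polynomial Ka) * C (1 - c^nn) = 1 := by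
    rw [← C_mul, he, inv_mul_cancel₀ h1, C_1]
  have key : w * (1 - C c * X^t) + C (c^nn) * (v * ((X:Polynomial Ka)^nn - 1)) = C (1 - c^nn) := by
    rw [mul_comm w, mul_comm v, ← hw, ← hv, C_sub, C_1]
    ring
  calc C e * w * (1 - C c * X^t) + C e * C (c^nn) * v * ((X:Polynomial Ka)^nn - 1)
      = C e * (w * (1 - C c * X^t) + C (c^nn) * (v * ((X:Polynomial Ka)^nn - 1))) := by ring
    _ = C e * C (1 - c^nn) := by rw [key]
    _ = 1 := hC

lemma X_pow_ne_one (n : ℕ) (hn : 0 < n) : ((RatFunc.X : RatFunc ℚ)) ^ n ≠ 1 := by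
  intro h
  rw [← RatFunc.algebraMap_X (K := ℚ), ← map_pow, ← map_one (algebraMap ℚ[X] (RatFunc ℚ))] at h
  have h2 := RatFunc.algebraMap_injective ℚ h
  have := congrArg natDegree h2
  simp [natDegree_X_pow] at this
  omega

set_option maxHeartbeats 1000000

/-- Lemma 2.1 of Guo–Schlosser. -/
theorem stmt10 (n : ℕ) (hodd : Odd n) (hpos : 0 < n) (k : ℕ) (hk : k ≤ (n - 1) / 2) :
    modCong
      (qp (a * q) (q ^ 2) ((n - 1) / 2 - k) / qp (q ^ 2 / a) (q ^ 2) ((n - 1) / 2 - k))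
      ((-a) ^ (((n : ℤ) - 1) / 2 - 2 * (k : ℤ)) * qp (a * q) (q ^ 2) k /
        qp (q ^ 2 / a) (q ^ 2) k * q ^ (((n - 1) / 2) ^ 2 + k))
      (cyclotomic n Ka) := by
  obtain ⟨m, hm⟩ := hodd
  have hn : n = 2*m+1 := by omega
  have hm2 : (n-1)/2 = m := by omega
  have hk' : k ≤ m := by omega
  set xa : Ka := RatFunc.X with hxadef
  have hxa0 : xa ≠ 0 := RatFunc.X_ne_zero
  set φ := algebraMap (Polynomial Ka) Kaq with hφdef
  set Np : ℕ → Polynomial Ka := fun t => ∏ j ∈ Finset.range t, (1 - C xa * X^(2*j+1)) with hNp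
  set Dp : ℕ → Polynomial Ka := fun t => ∏ j ∈ Finset.range t, (1 - C xa⁻¹ * X^(2*j+2)) with hDp
  set cc : Ka := (-1)^m * xa^m * (xa⁻¹)^(2*k) with hcc
  have hCinv : (RatFunc.C xa⁻¹ : Kaq) = (RatFunc.C xa)⁻¹ := map_inv₀ (RatFunc.C : Ka →+* Kaq) xa
  have ha : a = RatFunc.C xa := rfl
  have hqp1 : ∀ t, qp (a*q) (q^2) t = φ (Np t) := by
    intro t
    rw [qp, hNp, map_prod]
    refine Finset.prod_congr rfl (fun j _ => ?_)
    rw [map_sub, map_one, map_mul, map_pow, RatFunc.algebraMap_C, RatFunc.algebraMap_X, ← ha, ← q]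
    ring
  have hqp2 : ∀ t, qp (q^2/a) (q^2) t = φ (Dp t) := by
    intro t
    rw [qp, hDp, map_prod]
    refine Finset.prod_congr rfl (fun j _ => ?_)
    rw [map_sub, map_one, map_mul, map_pow, RatFunc.algebraMap_C, RatFunc.algebraMap_X,
      hCinv, ← ha, ← q, div_eq_mul_inv]
    ring
  have ha0 : a ≠ 0 := by
    rw [ha]; exact fun h => hxa0 (by simpa using h)
  -- the exponent identity for (-a)^z
  have hz : (-a) ^ (((n : ℤ) - 1) / 2 - 2 * (k : ℤ)) = φ (C cc) := by
    have hint : ((n : ℤ) - 1) / 2 - 2 * (k : ℤ) = (m : ℤ) - ((2*k : ℕ) : ℤ) := by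
      rw [hn]; push_cast; omega
    rw [hint, zpow_sub₀ (neg_ne_zero.mpr ha0), zpow_natCast, zpow_natCast,
      Even.neg_pow (even_two_mul k)]
    have hφcc : φ (C cc) = (-1)^m * a^m * (a⁻¹)^(2*k) := by
      simp only [hcc, C_mul, C_pow, map_mul, map_pow, map_neg, map_one, C_1, hφdef,
        RatFunc.algebraMap_C, hCinv, ← ha]
    rw [hφcc, neg_pow a m, div_eq_mul_inv, ← inv_pow]
  -- divisibility part
  set r : Polynomial Ka := Np (m-k) * Dp k - C cc * Np k * X^(m^2+k) * Dp (m-k) with hr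
  have hdvd : cyclotomic n Ka ∣ r := by
    refine dvd_trans (cyclotomic.dvd_X_pow_sub_one n Ka) ?_
    rw [← Ideal.mem_span_singleton]
    rw [← Ideal.Quotient.eq_zero_iff_mem]
    set π := Ideal.Quotient.mk (Ideal.span {(X:Polynomial Ka)^n - 1}) with hπ
    have hP1 : π ((X:Polynomial Ka)^n - 1) = 0 :=
      Ideal.Quotient.eq_zero_iff_mem.mpr (Ideal.subset_span rfl)
    have hQ : (π X)^(2*m+1) = 1 := by
      have h2 : π (X^n) - π 1 = 0 := by rw [← map_sub]; exact hP1
      rw [← hn, ← map_pow]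
      exact (sub_eq_zero.mp h2).trans (map_one π)
    have hu : (π (C xa)) * (π (C xa⁻¹)) = 1 := by
      rw [← map_mul, ← C_mul, mul_inv_cancel₀ hxa0, C_1, map_one]
    have hid := lemC (π (C xa)) (π (C xa⁻¹)) (π X) hu m hQ k hk'
    have hπN : ∀ t, π (Np t) = ∏ j ∈ Finset.range t, (1 - π (C xa) * (π X)^(2*j+1)) := by
      intro t; rw [hNp, map_prod]; simp
    have hπD : ∀ t, π (Dp t) = ∏ j ∈ Finset.range t, (1 - π (C xa⁻¹) * (π X)^(2*j+2)) := by
      intro t; rw [hDp, map_prod]; simp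
    have hπc : π (C cc) = (-1)^m * (π (C xa))^m * (π (C xa⁻¹))^(2*k) := by
      rw [hcc, C_mul, C_mul, map_mul, map_mul, C_pow, C_pow, C_pow, map_pow, map_pow, map_pow]
      simp
    rw [hr, map_sub, map_mul, map_mul, map_mul, map_mul, map_pow, hπN, hπN, hπD, hπD, hπc,
      sub_eq_zero, hid]
    ring
  -- coprimality part
  have hfaccop : ∀ j : ℕ, IsCoprime ((1 : Polynomial Ka) - C xa⁻¹ * X^(2*j+2)) (cyclotomic n Ka) := by
    intro j
    have hinvpow : (xa⁻¹) ^ n ≠ 1 := by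
      rw [inv_pow]
      exact fun h => X_pow_ne_one n hpos (inv_eq_one.mp h)
    exact (coprime_aux n xa⁻¹ hinvpow (2*j+2)).of_isCoprime_of_dvd_right
      (cyclotomic.dvd_X_pow_sub_one n Ka)
  have hDcop : ∀ t, IsCoprime (Dp t) (cyclotomic n Ka) := by
    intro t
    rw [hDp]
    exact IsCoprime.prod_left (fun j _ => hfaccop j)
  have hcop : IsCoprime (Dp (m-k) * Dp k) (cyclotomic n Ka) :=
    (hDcop (m-k)).mul_left (hDcop k)
  -- nonvanishing of denominators
  have hDne : ∀ t, Dp t ≠ 0 := by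
    intro t
    rw [hDp]
    refine Finset.prod_ne_zero_iff.mpr (fun j _ => ?_)
    intro h
    have h2 := congrArg (Polynomial.eval 0) h
    have h0 : (0:Ka)^(2*j+2) = 0 := zero_pow (by omega)
    rw [eval_sub, eval_one, eval_mul, eval_C, eval_pow, eval_X, h0, mul_zero, sub_zero,
      eval_zero] at h2
    exact one_ne_zero h2
  have hφDne : ∀ t, φ (Dp t) ≠ 0 := fun t => RatFunc.algebraMap_ne_zero (hDne t)
  -- final assembly
  refine ⟨r, Dp (m-k) * Dp k, hcop, hdvd, ?_⟩
  rw [hm2, hqp1, hqp1, hqp2, hqp2, hz]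
  have hqpow : q ^ (m^2 + k) = φ (X^(m^2+k)) := by
    rw [map_pow, RatFunc.algebraMap_X, q]
  have hy : φ (C cc) * φ (Np k) / φ (Dp k) * φ (X^(m^2+k))
      = φ (C cc * Np k * X^(m^2+k)) / φ (Dp k) := by
    rw [map_mul φ (C cc * Np k) (X^(m^2+k)), map_mul φ (C cc) (Np k)]; ring
  rw [hqpow, hy, div_sub_div _ _ (hφDne (m-k)) (hφDne k), hr, map_sub,
    map_mul φ (Dp (m-k)) (Dp k), map_mul φ (Np (m-k)) (Dp k),
    map_mul φ (C cc * Np k * X^(m^2+k)) (Dp (m-k))]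
  congr 1
  ring
end

section
/- For every prime p ≡ 3 (mod 4), the rising-factorial ratio (3/4)_{(p-1)/2} / (5/4)_{(p-1)/2} is congruent modulo p^2 (in Z_(p)) to -(p/16) · Γ_p(1/4)^4, where Γ_p is the Morita p-adic Gamma function. -/
/-- The rising factorial of a rational number. -/
def risingFac (a : ℚ) (k : ℕ) : ℚ := ∏ j ∈ Finset.range k, (a + j)

/-- The values of Morita's p-adic Gamma function at natural numbers:
Γ_p(n) = (-1)^n ∏_{0<j<n, p∤j} j. -/
noncomputable def moritaGammaNat (p : ℕ) [Fact p.Prime] (n : ℕ) : ℤ_[p] :=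
  (-1) ^ n * ∏ j ∈ (Finset.range n).filter (fun j => ¬ p ∣ j), (j : ℤ_[p])

open Finset Nat Filter

section Gres
variable (p : ℕ) [Fact p.Prime]

/-- The mod-p residue of `moritaGammaNat`. -/
noncomputable def gRes (n : ℕ) : ZMod p :=
  (-1) ^ n * ∏ j ∈ (Finset.range n).filter (fun j => ¬ p ∣ j), (j : ZMod p)

lemma toZMod_mGN (n : ℕ) :
    PadicInt.toZMod (moritaGammaNat p n) = gRes p n := by
  simp [moritaGammaNat, gRes, map_mul, map_pow, map_prod, map_natCast]

lemma gRes_succ (n : ℕ) :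
    gRes p (n + 1) = -(gRes p n) * (if p ∣ n then 1 else (n : ZMod p)) := by
  unfold gRes
  rw [Finset.range_add_one, Finset.filter_insert]
  by_cases h : p ∣ n
  · rw [if_neg (by simpa using h), if_pos h]
    ring
  · rw [if_pos h, if_neg h, Finset.prod_insert (by simp)]
    ring

lemma filter_range_self : (Finset.range p).filter (fun j => ¬ p ∣ j) = Finset.Ico 1 p := by
  ext j
  simp only [Finset.mem_filter, Finset.mem_range, Finset.mem_Ico]
  constructor
  · rintro ⟨hj, hd⟩
    refine ⟨?_, hj⟩
    rcases Nat.eq_zero_or_pos j with h | h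
    · exact absurd (h ▸ dvd_zero p) hd
    · exact h
  · rintro ⟨h1, h2⟩
    exact ⟨h2, fun hd => absurd (Nat.le_of_dvd h1 hd) (by omega)⟩

lemma gRes_p (hp2 : p ≠ 2) : gRes p p = 1 := by
  have hodd : Odd p := (Fact.out : p.Prime).odd_of_ne_two hp2
  unfold gRes
  rw [filter_range_self]
  have h1 : ∏ j ∈ Finset.Ico 1 p, (j : ZMod p) = ((Nat.factorial (p - 1) : ℕ) : ZMod p) := by
    rw [← Nat.cast_prod, ← Finset.prod_Ico_id_eq_factorial (p - 1),
      show p - 1 + 1 = p by have := (Fact.out : p.Prime).two_le; omega]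
  rw [h1, ZMod.wilsons_lemma, hodd.neg_one_pow]
  ring

lemma gRes_add_p (hp2 : p ≠ 2) (a : ℕ) : gRes p (a + p) = gRes p a := by
  induction a with
  | zero =>
    rw [Nat.zero_add, gRes_p p hp2]
    simp [gRes]
  | succ a ih =>
    have h : a + 1 + p = (a + p) + 1 := by omega
    rw [h, gRes_succ, gRes_succ, ih]
    have hd : p ∣ a + p ↔ p ∣ a := Nat.dvd_add_self_right
    have hc : ((a + p : ℕ) : ZMod p) = (a : ZMod p) := by
      push_cast [ZMod.natCast_self]
      ring
    by_cases hpa : p ∣ a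
    · rw [if_pos hpa, if_pos (hd.mpr hpa)]
    · rw [if_neg hpa, if_neg (fun h => hpa (hd.mp h)), hc]

lemma gRes_congr (hp2 : p ≠ 2) {a b : ℕ} (h : a % p = b % p) : gRes p a = gRes p b := by
  have key : ∀ c t : ℕ, gRes p (c + p * t) = gRes p c := by
    intro c t
    induction t with
    | zero => simp
    | succ t ih =>
      have : c + p * (t + 1) = (c + p * t) + p := by ring
      rw [this, gRes_add_p p hp2, ih]
  calc gRes p a = gRes p (a % p + p * (a / p)) := by rw [Nat.mod_add_div]
    _ = gRes p (a % p) := key _ _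
    _ = gRes p (b % p) := by rw [h]
    _ = gRes p (b % p + p * (b / p)) := (key _ _).symm
    _ = gRes p b := by rw [Nat.mod_add_div]

end Gres

-- ℕ identities
lemma natL1 (q : ℕ) : ∏ j ∈ range q, (4 * (q - j)) = 4 ^ q * q ! := by
  calc ∏ j ∈ range q, (4 * (q - j))
      = ∏ j ∈ range q, 4 * ((q - 1 - j) + 1) :=
        Finset.prod_congr rfl (fun j hj => by
          simp only [Finset.mem_range] at hj; congr 1; omega)
    _ = ∏ j ∈ range q, 4 * (j + 1) := Finset.prod_range_reflect (fun i => 4 * (i + 1)) q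
    _ = 4 ^ q * q ! := by
        rw [Finset.prod_mul_distrib, Finset.prod_const, Finset.card_range,
          Finset.prod_range_add_one_eq_factorial]

lemma natL2 (q : ℕ) : ∏ j ∈ range q, (4 * (q - j) - 2) = 2 ^ q * ∏ i ∈ range q, (2 * i + 1) := by
  calc ∏ j ∈ range q, (4 * (q - j) - 2)
      = ∏ j ∈ range q, 2 * (2 * (q - 1 - j) + 1) :=
        Finset.prod_congr rfl (fun j hj => by
          simp only [Finset.mem_range] at hj
          omega)
    _ = ∏ j ∈ range q, 2 * (2 * j + 1) := Finset.prod_range_reflect (fun i => 2 * (2 * i + 1)) q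
    _ = 2 ^ q * ∏ i ∈ range q, (2 * i + 1) := by
        rw [Finset.prod_mul_distrib, Finset.prod_const, Finset.card_range]

lemma natL3 (q : ℕ) : 2 ^ q * q ! * ∏ i ∈ range q, (2 * i + 1) = (2 * q)! := by
  induction q with
  | zero => simp
  | succ q ih =>
    rw [Finset.prod_range_succ, show 2 * (q + 1) = (2 * q + 1) + 1 by ring]
    rw [Nat.factorial_succ, Nat.factorial_succ, Nat.factorial_succ, ← ih]
    ring

lemma keyZMod (p : ℕ) [Fact p.Prime] (q : ℕ) (hp : p = 4 * q + 3) :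
    p ∣ 16 * (∏ j ∈ (Finset.range (2 * q + 1)).erase q, (4 * j + 3))
        + (q !) ^ 4 * (∏ j ∈ Finset.range (2 * q + 1), (4 * j + 5)) := by
  have hp2 : (2 : ZMod p) ≠ 0 := by
    have : ¬ (p ∣ 2) := by
      intro h
      have := Nat.le_of_dvd (by norm_num) h
      omega
    have h2 : (2 : ZMod p) = ((2 : ℕ) : ZMod p) := by norm_cast
    rw [h2, Ne, ZMod.natCast_eq_zero_iff]
    exact this
  have hp0 : ((p : ℕ) : ZMod p) = 0 := ZMod.natCast_self p
  set K := ZMod p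
  set Q : K := ((q ! : ℕ) : K) with hQ
  set D : K := ∏ i ∈ range q, ((2 * i + 1 : ℕ) : K) with hD
  set F : K := (((2 * q)! : ℕ) : K) with hF
  set t : K := ((2 * q + 1 : ℕ) : K) with ht
  have hsplit : (Finset.range (2 * q + 1)).erase q = Finset.range q ∪ Finset.Ico (q + 1) (2 * q + 1) := by
    ext j
    simp only [Finset.mem_erase, Finset.mem_range, Finset.mem_union, Finset.mem_Ico]
    omega
  have hA1 : ∏ j ∈ range q, ((4 * j + 3 : ℕ) : K) = (-1) ^ q * 4 ^ q * Q := by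
    have step : ∀ j ∈ range q, ((4 * j + 3 : ℕ) : K) = -(((4 * (q - j) : ℕ)) : K) := by
      intro j hj
      simp only [Finset.mem_range] at hj
      have : ((4 * j + 3 : ℕ) : K) + ((4 * (q - j) : ℕ) : K) = ((p : ℕ) : K) := by
        rw [← Nat.cast_add]
        congr 1
        omega
      rw [hp0] at this
      exact eq_neg_of_add_eq_zero_left this
    rw [Finset.prod_congr rfl step]
    have : ∏ j ∈ range q, -(((4 * (q - j) : ℕ)) : K)
        = (-1) ^ q * ∏ j ∈ range q, (((4 * (q - j) : ℕ)) : K) := by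
      calc ∏ j ∈ range q, -(((4 * (q - j) : ℕ)) : K)
          = ∏ j ∈ range q, ((-1) * (((4 * (q - j) : ℕ)) : K)) :=
            Finset.prod_congr rfl (fun j _ => by ring)
        _ = (-1) ^ q * ∏ j ∈ range q, (((4 * (q - j) : ℕ)) : K) := by
            rw [Finset.prod_mul_distrib, Finset.prod_const, Finset.card_range]
    rw [this, ← Nat.cast_prod, natL1, hQ]
    push_cast
    ring
  have hA2 : ∏ j ∈ Finset.Ico (q + 1) (2 * q + 1), ((4 * j + 3 : ℕ) : K) = 4 ^ q * Q := by
    rw [Finset.prod_Ico_eq_prod_range]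
    have step : ∀ i ∈ range (2 * q + 1 - (q + 1)), ((4 * (q + 1 + i) + 3 : ℕ) : K)
        = ((4 * (i + 1) : ℕ) : K) := by
      intro i _
      have : (4 * (q + 1 + i) + 3 : ℕ) = p + 4 * (i + 1) := by omega
      rw [this, Nat.cast_add, hp0, zero_add]
    rw [Finset.prod_congr rfl step, show 2 * q + 1 - (q + 1) = q by omega, ← Nat.cast_prod]
    have : ∏ i ∈ range q, (4 * (i + 1)) = 4 ^ q * q ! := by
      rw [Finset.prod_mul_distrib, Finset.prod_const, Finset.card_range,
        Finset.prod_range_add_one_eq_factorial]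
    rw [this, hQ]
    push_cast
    ring
  have hB1 : ∏ j ∈ range q, ((4 * j + 5 : ℕ) : K) = (-1) ^ q * 2 ^ q * D := by
    have step : ∀ j ∈ range q, ((4 * j + 5 : ℕ) : K) = -(((4 * (q - j) - 2 : ℕ)) : K) := by
      intro j hj
      simp only [Finset.mem_range] at hj
      have : ((4 * j + 5 : ℕ) : K) + ((4 * (q - j) - 2 : ℕ) : K) = ((p : ℕ) : K) := by
        rw [← Nat.cast_add]
        congr 1
        omega
      rw [hp0] at this
      exact eq_neg_of_add_eq_zero_left this
    calc ∏ j ∈ range q, ((4 * j + 5 : ℕ) : K)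
        = ∏ j ∈ range q, ((-1) * (((4 * (q - j) - 2 : ℕ)) : K)) :=
          Finset.prod_congr rfl (fun j hj => by rw [step j hj]; ring)
      _ = (-1) ^ q * ∏ j ∈ range q, (((4 * (q - j) - 2 : ℕ)) : K) := by
          rw [Finset.prod_mul_distrib, Finset.prod_const, Finset.card_range]
      _ = (-1) ^ q * 2 ^ q * D := by
          rw [← Nat.cast_prod, natL2, hD]
          push_cast [K]
          ring
  have hB2 : ∏ j ∈ Finset.Ico q (2 * q + 1), ((4 * j + 5 : ℕ) : K) = 2 ^ (q + 1) * D * t := by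
    rw [Finset.prod_Ico_eq_prod_range]
    have step : ∀ i ∈ range (2 * q + 1 - q), ((4 * (q + i) + 5 : ℕ) : K)
        = ((2 * (2 * i + 1) : ℕ) : K) := by
      intro i _
      have : (4 * (q + i) + 5 : ℕ) = p + 2 * (2 * i + 1) := by omega
      rw [this, Nat.cast_add, hp0, zero_add]
    rw [Finset.prod_congr rfl step, show 2 * q + 1 - q = q + 1 by omega, ← Nat.cast_prod]
    have : ∏ i ∈ range (q + 1), (2 * (2 * i + 1)) = 2 ^ (q + 1) * ((∏ i ∈ range q, (2 * i + 1)) * (2 * q + 1)) := by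
      rw [Finset.prod_mul_distrib, Finset.prod_const, Finset.card_range, Finset.prod_range_succ]
    rw [this, hD, ht]
    push_cast [K]
    ring
  have hW : (t * F) ^ 2 = ((2 * q + 1)! : K) ^ 2 := by
    rw [ht, hF, show ((2 * q + 1)!) = (2 * q + 1) * (2 * q)! from rfl]
    push_cast [K]
    ring
  have hWilson : (((2 * q + 1)! : ℕ) : K) ^ 2 = 1 := by
    have w : (((p - 1)! : ℕ) : K) = -1 := ZMod.wilsons_lemma p
    have hsplit2 : ((p - 1)! : ℕ) = (2 * q + 1)! * ∏ j ∈ Finset.Ico (2 * q + 2) (4 * q + 3), j := by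
      have h1 : ∏ j ∈ Finset.Ico 1 (2 * q + 2), j = (2 * q + 1)! :=
        Finset.prod_Ico_id_eq_factorial (2 * q + 1)
      have h3 : ((p - 1)! : ℕ) = ∏ j ∈ Finset.Ico 1 (4 * q + 3), j := by
        rw [show (4 * q + 3) = (p - 1) + 1 by omega, Finset.prod_Ico_id_eq_factorial]
      rw [h3, ← Finset.prod_Ico_consecutive (fun (j : ℕ) => j) (show (1:ℕ) ≤ 2 * q + 2 by omega)
          (show 2 * q + 2 ≤ 4 * q + 3 by omega), h1]
    have hX : ∏ j ∈ Finset.Ico (2 * q + 2) (4 * q + 3), ((j : ℕ) : K)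
        = -(((2 * q + 1)! : ℕ) : K) := by
      rw [Finset.prod_Ico_eq_prod_range, show 4 * q + 3 - (2 * q + 2) = 2 * q + 1 by omega]
      have step : ∀ i ∈ range (2 * q + 1), ((2 * q + 2 + i : ℕ) : K) = -(((2 * q + 1 - i : ℕ)) : K) := by
        intro i hi
        simp only [Finset.mem_range] at hi
        have : ((2 * q + 2 + i : ℕ) : K) + ((2 * q + 1 - i : ℕ) : K) = ((p : ℕ) : K) := by
          rw [← Nat.cast_add]; congr 1; omega
        rw [hp0] at this
        exact eq_neg_of_add_eq_zero_left this
      calc ∏ i ∈ range (2 * q + 1), ((2 * q + 2 + i : ℕ) : K)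
          = ∏ i ∈ range (2 * q + 1), ((-1) * (((2 * q + 1 - i : ℕ)) : K)) :=
            Finset.prod_congr rfl (fun i hi => by rw [step i hi]; ring)
        _ = (-1) ^ (2 * q + 1) * ∏ i ∈ range (2 * q + 1), (((2 * q + 1 - i : ℕ)) : K) := by
            rw [Finset.prod_mul_distrib, Finset.prod_const, Finset.card_range]
        _ = -(((2 * q + 1)! : ℕ) : K) := by
            have : ∏ i ∈ range (2 * q + 1), (2 * q + 1 - i) = (2 * q + 1)! := by
              calc ∏ i ∈ range (2 * q + 1), (2 * q + 1 - i)
                  = ∏ i ∈ range (2 * q + 1), ((2 * q + 1 - 1 - i) + 1) :=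
                    Finset.prod_congr rfl (fun i hi => by
                      simp only [Finset.mem_range] at hi; omega)
                _ = ∏ i ∈ range (2 * q + 1), (i + 1) :=
                    Finset.prod_range_reflect (fun i => i + 1) (2 * q + 1)
                _ = (2 * q + 1)! := Finset.prod_range_add_one_eq_factorial _
            rw [← Nat.cast_prod, this, Odd.neg_one_pow ⟨q, by ring⟩]
            ring
    rw [hsplit2, Nat.cast_mul, Nat.cast_prod, hX] at w
    rw [sq]
    linear_combination -w
  have hFermat : (2 : K) ^ (4 * q + 2) = 1 := by
    have h := ZMod.pow_card_sub_one_eq_one hp2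
    rwa [show p - 1 = 4 * q + 2 by omega] at h
  have h16 : (16 : K) ^ (q + 1) = 4 := by
    rw [show (16 : K) = 2 ^ 4 by norm_num, ← pow_mul, show 4 * (q + 1) = (4 * q + 2) + 2 by ring,
      pow_add, hFermat, one_mul]
    norm_num
  have h4' : (t * F) ^ 2 = 1 := by rw [hW]; exact hWilson
  have h5 : 2 * t = -1 := by
    have hc0 : ((2 * (2 * q + 1) + 1 : ℕ) : K) = ((p : ℕ) : K) := by
      congr 1
      omega
    have hcast : (2 : K) * t + 1 = ((p : ℕ) : K) := by
      rw [← hc0, ht]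
      push_cast [K]
      ring
    rw [hp0] at hcast
    linear_combination hcast
  have hF2 : F ^ 2 = 4 := by
    linear_combination 4 * h4' - (F ^ 2 * (2 * t - 1)) * h5
  have h3 : 2 ^ q * Q * D = F := by
    rw [hF, ← natL3 q, hQ, hD, ← Nat.cast_prod]
    push_cast [K]
    ring
  have h44 : (4 : K) ^ q * 4 ^ q = 16 ^ q := by rw [← mul_pow]; norm_num
  have hdisj : Disjoint (Finset.range q) (Finset.Ico (q + 1) (2 * q + 1)) := by
    rw [Finset.disjoint_left]
    intro a ha hb
    simp only [Finset.mem_range] at ha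
    simp only [Finset.mem_Ico] at hb
    omega
  rw [← ZMod.natCast_eq_zero_iff, Nat.cast_add, Nat.cast_mul, Nat.cast_mul,
    Nat.cast_pow, Nat.cast_prod, Nat.cast_prod]
  rw [hsplit, Finset.prod_union hdisj, hA1, hA2]
  rw [Finset.range_eq_Ico, ← Finset.prod_Ico_consecutive (fun j => ((4 * j + 5 : ℕ) : K))
    (Nat.zero_le q) (by omega), ← Finset.range_eq_Ico, hB1, hB2, ← hQ, Nat.cast_ofNat]
  linear_combination ((-1 : K) ^ q * Q ^ 2) * h16
    + ((-1 : K) ^ q * Q ^ 2 * 2 * t * (2 ^ q * Q * D + F)) * h3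
    + ((-1 : K) ^ q * Q ^ 2 * 2 * t) * hF2
    + ((-1 : K) ^ q * Q ^ 2 * 4) * h5
    + (16 * (-1 : K) ^ q * Q ^ 2) * h44

/-- For primes p ≡ 3 (mod 4), (3/4)_{(p-1)/2}/(5/4)_{(p-1)/2} ≡ -(p/16)Γ_p(1/4)^4 (mod p^2),
where Γ_p is the (unique) continuous extension to ℤ_p of `moritaGammaNat` and
1/4 is the inverse of 4 in ℤ_p. -/
theorem stmt16 (p : ℕ) [Fact p.Prime] (h4 : p % 4 = 3)
    (G : ℤ_[p] → ℚ_[p]) (hGcont : Continuous G)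
    (hGnat : ∀ n : ℕ, G (n : ℤ_[p]) = ((moritaGammaNat p n : ℤ_[p]) : ℚ_[p]))
    (z : ℤ_[p]) (hz : 4 * z = 1) :
    ‖((risingFac (3/4) ((p - 1) / 2) / risingFac (5/4) ((p - 1) / 2) : ℚ) : ℚ_[p])
      - (-((p : ℚ_[p]) / 16) * (G z) ^ 4)‖ ≤ (p : ℝ) ^ (-(2 : ℤ)) := by
  classical
  have hprime : p.Prime := Fact.out
  have hple : 2 ≤ p := hprime.two_le
  obtain ⟨q, hp⟩ : ∃ q, p = 4 * q + 3 := ⟨p / 4, by omega⟩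
  have hp2 : p ≠ 2 := by omega
  have hm : (p - 1) / 2 = 2 * q + 1 := by omega
  rw [hm]
  set m := 2 * q + 1 with hmdef
  set A := ∏ j ∈ Finset.range m, (4 * j + 3) with hAdef
  set B := ∏ j ∈ Finset.range m, (4 * j + 5) with hBdef
  -- rational identities
  have hBpos : 0 < B := Finset.prod_pos (fun j _ => by omega)
  have hrf3 : risingFac (3/4) m = (A : ℚ) / 4 ^ m := by
    unfold risingFac
    calc ∏ j ∈ Finset.range m, ((3:ℚ)/4 + j)
        = ∏ j ∈ Finset.range m, ((4 * j + 3 : ℕ) : ℚ) / 4 :=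
          Finset.prod_congr rfl (fun j _ => by push_cast; ring)
      _ = (∏ j ∈ Finset.range m, ((4 * j + 3 : ℕ) : ℚ)) / ∏ j ∈ Finset.range m, (4:ℚ) :=
          Finset.prod_div_distrib _ _
      _ = (A : ℚ) / 4 ^ m := by
          rw [← Nat.cast_prod, Finset.prod_const, Finset.card_range]
  have hrf5 : risingFac (5/4) m = (B : ℚ) / 4 ^ m := by
    unfold risingFac
    calc ∏ j ∈ Finset.range m, ((5:ℚ)/4 + j)
        = ∏ j ∈ Finset.range m, ((4 * j + 5 : ℕ) : ℚ) / 4 :=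
          Finset.prod_congr rfl (fun j _ => by push_cast; ring)
      _ = (∏ j ∈ Finset.range m, ((4 * j + 5 : ℕ) : ℚ)) / ∏ j ∈ Finset.range m, (4:ℚ) :=
          Finset.prod_div_distrib _ _
      _ = (B : ℚ) / 4 ^ m := by
          rw [← Nat.cast_prod, Finset.prod_const, Finset.card_range]
  have hrat : (risingFac (3/4) m / risingFac (5/4) m : ℚ) = (A : ℚ) / (B : ℚ) := by
    rw [hrf3, hrf5, div_div_div_comm, div_self (by positivity : ((4:ℚ)) ^ m ≠ 0), div_one]
  -- p does not divide B
  have hpBnat : ¬ p ∣ B := by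
    intro hdvd
    obtain ⟨j, hj, hpj⟩ := (Nat.Prime.prime hprime).exists_mem_finset_dvd hdvd
    simp only [Finset.mem_range] at hj
    obtain ⟨c, hc⟩ := hpj
    rw [hp] at hc
    have hcb : c ≤ 2 := by nlinarith
    interval_cases c <;> omega
  -- the Gamma value at q+1
  set Γ : ℤ_[p] := moritaGammaNat p (q + 1) with hΓdef
  have hmg : Γ = (-1) ^ (q + 1) * ((q ! : ℕ) : ℤ_[p]) := by
    rw [hΓdef]
    unfold moritaGammaNat
    have hf : (Finset.range (q + 1)).filter (fun j => ¬ p ∣ j) = Finset.Ico 1 (q + 1) := by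
      ext j
      simp only [Finset.mem_filter, Finset.mem_range, Finset.mem_Ico]
      constructor
      · rintro ⟨hj, hd⟩
        refine ⟨?_, hj⟩
        rcases Nat.eq_zero_or_pos j with h | h
        · exact absurd (h ▸ dvd_zero p) hd
        · exact h
      · rintro ⟨h1, h2⟩
        refine ⟨h2, fun hd => ?_⟩
        have := Nat.le_of_dvd h1 hd
        omega
    rw [hf, ← Nat.cast_prod, Finset.prod_Ico_id_eq_factorial q]
  -- z is congruent to q+1 mod p
  have h4K : (4 : ZMod p) ≠ 0 := by
    have hnd : ¬ p ∣ 4 := by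
      intro h
      have h1 := Nat.le_of_dvd (by norm_num) h
      have : p = 3 := by omega
      rw [this] at h
      norm_num at h
    have h2 : (4 : ZMod p) = ((4 : ℕ) : ZMod p) := by norm_cast
    rw [h2, Ne, ZMod.natCast_eq_zero_iff]
    exact hnd
  have hz4 : (4 : ZMod p) * PadicInt.toZMod z = 1 := by
    have h := congrArg PadicInt.toZMod hz
    rw [map_mul, map_one, map_ofNat] at h
    exact h
  have hq1 : (4 : ZMod p) * (((q + 1 : ℕ)) : ZMod p) = 1 := by
    have h1 : ((4 * (q + 1) : ℕ) : ZMod p) = ((p : ℕ) : ZMod p) + 1 := by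
      rw [show 4 * (q + 1) = p + 1 by omega]
      push_cast
      ring
    rw [ZMod.natCast_self, zero_add] at h1
    calc (4 : ZMod p) * (((q + 1 : ℕ)) : ZMod p) = ((4 * (q + 1) : ℕ) : ZMod p) := by
          push_cast; ring
      _ = 1 := h1
  have hzres : PadicInt.toZMod z = ((q + 1 : ℕ) : ZMod p) :=
    mul_left_cancel₀ h4K (hz4.trans hq1.symm)
  -- approximation of G z
  have happr : ∀ k : ℕ, ‖G ((z.appr (k+1) : ℕ) : ℤ_[p]) - ((Γ : ℤ_[p]) : ℚ_[p])‖ ≤ (p:ℝ) ^ (-1 : ℤ) := by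
    intro k
    set n := z.appr (k+1) with hn
    rw [hGnat n]
    have h1 : PadicInt.toZMod ((n : ℕ) : ℤ_[p]) = PadicInt.toZMod z := by
      have hsp := PadicInt.appr_spec (k+1) z
      rw [Ideal.mem_span_singleton] at hsp
      have hker : z - ((n : ℕ) : ℤ_[p]) ∈ RingHom.ker (PadicInt.toZMod (p := p)) := by
        rw [PadicInt.ker_toZMod, PadicInt.maximalIdeal_eq_span_p, Ideal.mem_span_singleton]
        exact dvd_trans (dvd_pow_self ((p : ℤ_[p])) (Nat.succ_ne_zero k)) hsp
      have h2 := RingHom.mem_ker.mp hker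
      rw [map_sub, sub_eq_zero] at h2
      exact h2.symm
    have h2 : ((n : ℕ) : ZMod p) = ((q + 1 : ℕ) : ZMod p) := by
      rw [← map_natCast (PadicInt.toZMod (p := p)), h1, hzres]
    have h3 : gRes p n = gRes p (q + 1) :=
      gRes_congr p hp2 ((ZMod.natCast_eq_natCast_iff' _ _ _).mp h2)
    have h4' : PadicInt.toZMod (moritaGammaNat p n - Γ) = 0 := by
      rw [map_sub, hΓdef, toZMod_mGN, toZMod_mGN, h3, sub_self]
    have h5 : ‖moritaGammaNat p n - Γ‖ ≤ (p:ℝ) ^ (-(1:ℕ) : ℤ) := by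
      rw [PadicInt.norm_le_pow_iff_mem_span_pow, pow_one, ← PadicInt.maximalIdeal_eq_span_p,
        ← PadicInt.ker_toZMod]
      exact RingHom.mem_ker.mpr h4'
    calc ‖((moritaGammaNat p n : ℤ_[p]) : ℚ_[p]) - ((Γ : ℤ_[p]) : ℚ_[p])‖
        = ‖moritaGammaNat p n - Γ‖ := by
          rw [← PadicInt.coe_sub, PadicInt.padic_norm_e_of_padicInt]
      _ ≤ (p:ℝ) ^ (-1 : ℤ) := by exact_mod_cast h5
  have htend : Filter.Tendsto (fun k : ℕ => ((z.appr (k+1) : ℕ) : ℤ_[p])) Filter.atTop (nhds z) := by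
    have hb : ∀ k : ℕ, ‖((z.appr (k+1) : ℕ) : ℤ_[p]) - z‖ ≤ ((p:ℝ)⁻¹) ^ (k+1) := by
      intro k
      have h := PadicInt.appr_spec (k+1) z
      have h2 := (PadicInt.norm_le_pow_iff_mem_span_pow (z - ((z.appr (k+1) : ℕ) : ℤ_[p])) (k+1)).mpr h
      rw [norm_sub_rev]
      calc ‖z - ((z.appr (k+1) : ℕ) : ℤ_[p])‖ ≤ (p:ℝ) ^ (-(k+1:ℕ) : ℤ) := h2
        _ = ((p:ℝ)⁻¹) ^ (k+1) := by rw [zpow_neg, inv_pow, ← zpow_natCast]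
    rw [tendsto_iff_norm_sub_tendsto_zero]
    have hp1 : (1:ℝ) < p := by exact_mod_cast hprime.one_lt
    have hlim : Filter.Tendsto (fun k : ℕ => ((p:ℝ)⁻¹) ^ (k+1)) Filter.atTop (nhds 0) :=
      (tendsto_pow_atTop_nhds_zero_of_lt_one (by positivity) (by
        rw [inv_lt_one_iff₀]; right; exact hp1)).comp (tendsto_add_atTop_nat 1)
    exact squeeze_zero (fun k => norm_nonneg _) hb hlim
  have hlim : ‖G z - ((Γ : ℤ_[p]) : ℚ_[p])‖ ≤ (p:ℝ) ^ (-1 : ℤ) := by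
    have hcomp : Filter.Tendsto (fun k : ℕ => G ((z.appr (k+1) : ℕ) : ℤ_[p])) Filter.atTop
        (nhds (G z)) := (hGcont.tendsto z).comp htend
    have hnorm : Filter.Tendsto
        (fun k : ℕ => ‖G ((z.appr (k+1) : ℕ) : ℤ_[p]) - ((Γ : ℤ_[p]) : ℚ_[p])‖) Filter.atTop
        (nhds ‖G z - ((Γ : ℤ_[p]) : ℚ_[p])‖) := (hcomp.sub tendsto_const_nhds).norm
    exact le_of_tendsto hnorm (Filter.Eventually.of_forall happr)
  -- assembly
  set Γq : ℚ_[p] := ((Γ : ℤ_[p]) : ℚ_[p]) with hΓq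
  set e : ℚ_[p] := G z - Γq with he_def
  have he : ‖e‖ ≤ (p:ℝ) ^ (-1 : ℤ) := hlim
  have hGz : G z = Γq + e := by rw [he_def]; ring
  have hΓ4 : Γq ^ 4 = ((q ! : ℕ) : ℚ_[p]) ^ 4 := by
    rw [hΓq, hmg]
    push_cast
    rw [mul_pow, ← pow_mul, show (q+1) * 4 = 2 * (2 * (q + 1)) by ring, pow_mul]
    norm_num
  -- norms
  have hp1R : (1:ℝ) ≤ p := by exact_mod_cast hprime.one_lt.le
  have hnormp : ‖(p : ℚ_[p])‖ = (p:ℝ) ^ (-1 : ℤ) := by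
    rw [Padic.norm_p, zpow_neg, zpow_one]
  have hnorm16 : ‖(16 : ℚ_[p])‖ = 1 := by
    have hcast : (16 : ℚ_[p]) = ((16 : ℤ) : ℚ_[p]) := by norm_cast
    rw [hcast]
    refine le_antisymm (Padic.norm_int_le_one _) ?_
    by_contra hlt
    push_neg at hlt
    rw [Padic.norm_intCast_lt_one_iff] at hlt
    have h16 : p ∣ 16 := by exact_mod_cast hlt
    have h2 : p ∣ 2 := hprime.dvd_of_dvd_pow (n := 4) ((by norm_num : (16:ℕ) = 2 ^ 4) ▸ h16)
    have := Nat.le_of_dvd (by norm_num) h2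
    omega
  have hnormB : ‖(B : ℚ_[p])‖ = 1 := by
    have hcast : ((B : ℕ) : ℚ_[p]) = ((B : ℤ) : ℚ_[p]) := by push_cast; ring
    rw [hcast]
    refine le_antisymm (Padic.norm_int_le_one _) ?_
    by_contra hlt
    push_neg at hlt
    rw [Padic.norm_intCast_lt_one_iff] at hlt
    exact hpBnat (by exact_mod_cast hlt)
  have hnormΓq : ‖Γq‖ ≤ 1 := by
    rw [hΓq, PadicInt.padic_norm_e_of_padicInt]
    exact PadicInt.norm_le_one _
  have hpinv_le : (p:ℝ) ^ (-1 : ℤ) ≤ 1 := by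
    rw [zpow_neg, zpow_one]
    exact inv_le_one_of_one_le₀ hp1R
  have hnorme1 : ‖e‖ ≤ 1 := he.trans hpinv_le
  have hΓe : ‖Γq + e‖ ≤ 1 := le_trans (Padic.nonarchimedean _ _) (max_le hnormΓq hnorme1)
  -- the main divisibility
  set N : ℕ := 16 * A + p * (q !) ^ 4 * B with hNdef
  have hdvdN : p ^ 2 ∣ N := by
    have hqmem : q ∈ Finset.range m := by
      simp only [Finset.mem_range]
      omega
    have hAfac : A = p * ∏ j ∈ (Finset.range m).erase q, (4 * j + 3) := by
      rw [hAdef, ← Finset.mul_prod_erase (Finset.range m) _ hqmem, show 4 * q + 3 = p from hp.symm]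
    have hkey := keyZMod p q hp
    have hfact : N = p * (16 * (∏ j ∈ (Finset.range m).erase q, (4 * j + 3)) + (q !) ^ 4 * B) := by
      rw [hNdef, hAfac]
      ring
    rw [hfact, pow_two]
    exact Nat.mul_dvd_mul_left p (by simpa [hmdef, hBdef] using hkey)
  have hnormN : ‖(N : ℚ_[p])‖ ≤ (p:ℝ) ^ (-(2:ℤ)) := by
    have hcast : ((N : ℕ) : ℚ_[p]) = ((N : ℤ) : ℚ_[p]) := by push_cast; ring
    rw [hcast]
    have := (Padic.norm_int_le_pow_iff_dvd (N : ℤ) 2).mpr (by exact_mod_cast hdvdN)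
    exact_mod_cast this
  -- nonzero denominators
  have hB0 : (B : ℚ_[p]) ≠ 0 := by
    intro h0
    rw [h0] at hnormB
    simp at hnormB
  have h160 : (16 : ℚ_[p]) ≠ 0 := by
    intro h0
    rw [h0] at hnorm16
    simp at hnorm16
  -- decomposition
  set S : ℚ_[p] := (Γq + e) ^ 3 + (Γq + e) ^ 2 * Γq + (Γq + e) * Γq ^ 2 + Γq ^ 3 with hSdef
  have hmain : (A : ℚ_[p]) / B + ((p:ℚ_[p]) / 16) * Γq ^ 4 = (N : ℚ_[p]) / (16 * B) := by
    rw [hΓ4]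
    have hN' : (N : ℚ_[p]) = 16 * A + p * ((q ! : ℕ) : ℚ_[p]) ^ 4 * B := by
      rw [hNdef]
      push_cast
      ring
    rw [hN']
    field_simp
  have hsplit4 : (A : ℚ_[p]) / B + ((p:ℚ_[p]) / 16) * (Γq + e) ^ 4
      = (N : ℚ_[p]) / (16 * B) + ((p:ℚ_[p]) / 16) * (e * S) := by
    rw [hSdef]
    linear_combination hmain
  -- norm bounds
  have hnorm1 : ‖(N : ℚ_[p]) / (16 * B)‖ ≤ (p:ℝ) ^ (-(2:ℤ)) := by
    rw [norm_div, norm_mul, hnorm16, hnormB, one_mul, div_one]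
    exact hnormN
  have hSle : ‖S‖ ≤ 1 := by
    have h1' : ‖(Γq + e) ^ 3‖ ≤ 1 := by
      rw [norm_pow]
      exact pow_le_one₀ (norm_nonneg _) hΓe
    have h2' : ‖(Γq + e) ^ 2 * Γq‖ ≤ 1 := by
      rw [norm_mul, norm_pow]
      exact mul_le_one₀ (pow_le_one₀ (norm_nonneg _) hΓe) (by positivity) hnormΓq
    have h3' : ‖(Γq + e) * Γq ^ 2‖ ≤ 1 := by
      rw [norm_mul, norm_pow]
      exact mul_le_one₀ hΓe (by positivity) (pow_le_one₀ (norm_nonneg _) hnormΓq)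
    have h4'' : ‖Γq ^ 3‖ ≤ 1 := by
      rw [norm_pow]
      exact pow_le_one₀ (norm_nonneg _) hnormΓq
    rw [hSdef]
    refine le_trans (Padic.nonarchimedean _ _) (max_le ?_ h4'')
    refine le_trans (Padic.nonarchimedean _ _) (max_le ?_ h3')
    exact le_trans (Padic.nonarchimedean _ _) (max_le h1' h2')
  have hnorm2 : ‖((p:ℚ_[p]) / 16) * (e * S)‖ ≤ (p:ℝ) ^ (-(2:ℤ)) := by
    rw [norm_mul, norm_div, hnorm16, div_one, hnormp, norm_mul]
    calc (p:ℝ) ^ (-1 : ℤ) * (‖e‖ * ‖S‖)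
        ≤ (p:ℝ) ^ (-1 : ℤ) * ((p:ℝ) ^ (-1 : ℤ) * 1) := by
          apply mul_le_mul_of_nonneg_left
            (mul_le_mul he hSle (norm_nonneg _) (by positivity)) (by positivity)
      _ = (p:ℝ) ^ (-(2:ℤ)) := by
          rw [mul_one, ← zpow_add₀ (by positivity : (p:ℝ) ≠ 0)]
          norm_num
  -- finish
  have hcast : ((risingFac (3/4) m / risingFac (5/4) m : ℚ) : ℚ_[p]) = (A : ℚ_[p]) / (B : ℚ_[p]) := by
    rw [hrat]
    push_cast
    ring
  calc ‖((risingFac (3/4) m / risingFac (5/4) m : ℚ) : ℚ_[p]) - (-((p : ℚ_[p]) / 16) * G z ^ 4)‖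
      = ‖(N : ℚ_[p]) / (16 * B) + ((p:ℚ_[p]) / 16) * (e * S)‖ := by
        rw [hcast, hGz, show (A : ℚ_[p]) / B - (-((p : ℚ_[p]) / 16) * (Γq + e) ^ 4)
          = (A : ℚ_[p]) / B + ((p:ℚ_[p]) / 16) * (Γq + e) ^ 4 from by ring, hsplit4]
    _ ≤ max ‖(N : ℚ_[p]) / (16 * B)‖ ‖((p:ℚ_[p]) / 16) * (e * S)‖ :=
        Padic.nonarchimedean _ _
    _ ≤ (p : ℝ) ^ (-(2:ℤ)) := max_le hnorm1 hnorm2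
end
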